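/- The minimizer of the Boltzmann entropy functional h(f) = ⟨f ln f − f⟩ over nonnegative f ∈ L²([-1,1]) satisfying the moment constraints ⟨f⟩ = ρ, ⟨v f⟩ = j (with ρ > 0 and |j/ρ| < 1) is the exponential function f̂(v) = e^{α + βv}, where β = z⁻¹(j/ρ) and e^α = ρ β / sinh β. -/

import Mathlib

open MeasureTheory Set

/-- `z(β) = coth β − 1/β`. -/
noncomputable def z (β : ℝ) : ℝ := Real.cosh β / Real.sinh β - 1/β

/-- Convexity inequality: tangent line of `x ↦ x log x - x` at `y`. -/
lemma entropy_ptwise (x y : ℝ) (hx : 0 ≤ x) (hy : 0 < y) :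
    y * Real.log y - y + Real.log y * (x - y) ≤ x * Real.log x - x := by
  rcases eq_or_lt_of_le hx with h | h
  · simp only [← h, Real.log_zero, mul_zero, zero_mul, zero_sub, sub_zero, mul_neg]
    nlinarith [hy]
  · have h1 : Real.log (y / x) ≤ y / x - 1 := Real.log_le_sub_one_of_pos (by positivity)
    rw [Real.log_div hy.ne' h.ne'] at h1
    have h2 : x * (Real.log y - Real.log x) ≤ x * (y / x - 1) :=
      mul_le_mul_of_nonneg_left h1 h.le
    have h3 : x * (y / x - 1) = y - x := by field_simp
    nlinarith [h2]

/-- Bound needed for integrability of `f log f` when `f ∈ L²`. -/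
lemma entropy_bound (x : ℝ) (hx : 0 ≤ x) : |x * Real.log x| ≤ 1 + x ^ 2 := by
  rcases le_or_gt x 1 with h | h
  · rcases eq_or_lt_of_le hx with h0 | h0
    · simp [← h0]
    · have := Real.abs_log_mul_self_lt x h0 h
      rw [abs_mul] at this ⊢
      nlinarith [sq_nonneg x, abs_nonneg (Real.log x)]
  · have hl : 0 ≤ Real.log x := Real.log_nonneg h.le
    have hls : Real.log x ≤ x - 1 := Real.log_le_sub_one_of_pos (by linarith)
    rw [abs_of_nonneg (by positivity)]
    nlinarith

lemma int_exp_mul {β : ℝ} (hβ : β ≠ 0) :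
    ∫ v in (-1:ℝ)..1, Real.exp (β * v) = (Real.exp β - Real.exp (-β)) / β := by
  have key : ∀ v : ℝ, HasDerivAt (fun v => Real.exp (β * v) / β) (Real.exp (β * v)) v := by
    intro v
    have h1 : HasDerivAt (fun v : ℝ => β * v) β v := by
      simpa using (hasDerivAt_id v).const_mul β
    have h2 := (h1.exp).div_const β
    exact h2.congr_deriv (by field_simp)
  rw [intervalIntegral.integral_eq_sub_of_hasDerivAt (fun v _ => key v)
    ((Real.continuous_exp.comp (continuous_const.mul continuous_id)).intervalIntegrable _ _)]
  norm_num
  ring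

lemma int_mul_exp {β : ℝ} (hβ : β ≠ 0) :
    ∫ v in (-1:ℝ)..1, v * Real.exp (β * v) =
      (Real.exp β + Real.exp (-β)) / β - (Real.exp β - Real.exp (-β)) / β ^ 2 := by
  have key : ∀ v : ℝ, HasDerivAt (fun v => (v / β - 1 / β ^ 2) * Real.exp (β * v))
      (v * Real.exp (β * v)) v := by
    intro v
    have h1 : HasDerivAt (fun v : ℝ => v / β - 1 / β ^ 2) (1 / β) v :=
      ((hasDerivAt_id v).div_const β).sub_const _
    have h2 : HasDerivAt (fun v : ℝ => Real.exp (β * v)) (Real.exp (β * v) * β) v := by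
      have h1 : HasDerivAt (fun v : ℝ => β * v) β v := by
        simpa using (hasDerivAt_id v).const_mul β
      exact h1.exp
    have h3 := h1.mul h2
    exact h3.congr_deriv (by field_simp; ring)
  rw [intervalIntegral.integral_eq_sub_of_hasDerivAt (fun v _ => key v)
    ((continuous_id.mul (Real.continuous_exp.comp (continuous_const.mul continuous_id))).intervalIntegrable _ _)]
  norm_num
  field_simp
  ring

/-- The exponential `f̂(v) = e^{α+βv}`, with `β = z⁻¹(j/ρ)` and `e^α = ρ β / sinh β`
(equal to `ρ` when `β = 0`), minimizes the Boltzmann entropy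
`h(f) = ⟨f ln f − f⟩` among nonnegative `f ∈ L²([-1,1])` with moments
`⟨f⟩ = ρ`, `⟨v f⟩ = j`. -/
theorem m1_entropy_minimizer (ρ j α β : ℝ) (hρ : 0 < ρ) (hj : |j / ρ| < 1)
    (hβ : z β = j / ρ)
    (hα : Real.exp α = if β = 0 then ρ else ρ * β / Real.sinh β) :
    ∀ f : ℝ → ℝ,
      MemLp f 2 (volume.restrict (Icc (-1:ℝ) 1)) →
      (∀ v ∈ Icc (-1:ℝ) 1, 0 ≤ f v) →
      (1/2) * ∫ v in (-1:ℝ)..1, f v = ρ →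
      (1/2) * ∫ v in (-1:ℝ)..1, v * f v = j →
      (1/2) * ∫ v in (-1:ℝ)..1,
          (Real.exp (α + β * v) * Real.log (Real.exp (α + β * v)) - Real.exp (α + β * v))
        ≤ (1/2) * ∫ v in (-1:ℝ)..1, (f v * Real.log (f v) - f v) := by
  intro f hmem hpos hm1 hm2
  have hle : (-1:ℝ) ≤ 1 := by norm_num
  -- moments of the exponential
  have hsplit : ∀ v : ℝ, Real.exp (α + β * v) = Real.exp α * Real.exp (β * v) := by
    intro v; rw [Real.exp_add]
  have hint1 : ∫ v in (-1:ℝ)..1, Real.exp (α + β * v) = 2 * ρ := by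
    simp_rw [hsplit]
    rw [intervalIntegral.integral_const_mul]
    by_cases h0 : β = 0
    · subst h0
      simp only [zero_mul, Real.exp_zero, intervalIntegral.integral_const, smul_eq_mul, mul_one]
      rw [hα]; simp; ring
    · have hs : Real.sinh β ≠ 0 := Real.sinh_ne_zero.mpr h0
      have hs' : Real.exp β - Real.exp (-β) ≠ 0 := by
        rw [Real.sinh_eq] at hs
        intro hc; apply hs; rw [hc]; norm_num
      rw [int_exp_mul h0, hα, if_neg h0, Real.sinh_eq]
      field_simp
  have hj0 : β = 0 → j = 0 := by
    intro h0
    have : z 0 = 0 := by simp [z]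
    rw [h0, this] at hβ
    field_simp at hβ
    linarith [hβ]
  have hint2 : ∫ v in (-1:ℝ)..1, v * Real.exp (α + β * v) = 2 * j := by
    simp_rw [hsplit]
    have comm : ∀ v : ℝ, v * (Real.exp α * Real.exp (β * v)) =
        Real.exp α * (v * Real.exp (β * v)) := fun v => by ring
    simp_rw [comm]
    rw [intervalIntegral.integral_const_mul]
    by_cases h0 : β = 0
    · subst h0
      simp only [zero_mul, Real.exp_zero, mul_one]
      rw [integral_id]
      rw [hj0 rfl]
      norm_num
    · rw [int_mul_exp h0, hα, if_neg h0]
      have hzβ : Real.cosh β / Real.sinh β - 1/β = j / ρ := hβ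
      have hs : Real.sinh β ≠ 0 := Real.sinh_ne_zero.mpr h0
      have hcosh : Real.cosh β = (Real.exp β + Real.exp (-β)) / 2 := Real.cosh_eq β
      have hsinh : Real.sinh β = (Real.exp β - Real.exp (-β)) / 2 := Real.sinh_eq β
      rw [hcosh, hsinh] at hzβ
      rw [hsinh] at hs ⊢
      have hρ' : ρ ≠ 0 := hρ.ne'
      have hs' : Real.exp β - Real.exp (-β) ≠ 0 := by
        intro hc; apply hs; rw [hc]; norm_num
      field_simp at hzβ ⊢
      nlinarith [hzβ]
  -- integrability
  have hfi : IntegrableOn f (Icc (-1:ℝ) 1) volume := by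
    haveI : Fact (volume (Icc (-1:ℝ) 1) < ⊤) := ⟨measure_Icc_lt_top⟩
    exact memLp_one_iff_integrable.mp (hmem.mono_exponent (by norm_num))
  have If : IntervalIntegrable f volume (-1) 1 := by
    rw [intervalIntegrable_iff_integrableOn_Icc_of_le hle]; exact hfi
  have hvfi : IntegrableOn (fun v => v * f v) (Icc (-1:ℝ) 1) volume := by
    apply Integrable.mono' hfi.norm (aestronglyMeasurable_id.mul hmem.aestronglyMeasurable)
    rw [ae_restrict_iff' measurableSet_Icc]
    refine ae_of_all _ fun v hv => ?_
    simp only [Pi.mul_apply, id_eq, norm_mul]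
    exact mul_le_of_le_one_left (norm_nonneg _)
      (by rw [Real.norm_eq_abs]; exact abs_le.mpr ⟨hv.1, hv.2⟩)
  have Ivf : IntervalIntegrable (fun v => v * f v) volume (-1) 1 := by
    rw [intervalIntegrable_iff_integrableOn_Icc_of_le hle]; exact hvfi
  have hflogi : IntegrableOn (fun v => f v * Real.log (f v)) (Icc (-1:ℝ) 1) volume := by
    apply Integrable.mono' ((integrable_const (1:ℝ)).add hmem.integrable_sq)
      (hmem.aestronglyMeasurable.mul
        (Real.measurable_log.comp_aemeasurable
          hmem.aestronglyMeasurable.aemeasurable).aestronglyMeasurable)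
    rw [ae_restrict_iff' measurableSet_Icc]
    refine ae_of_all _ fun v hv => ?_
    rw [Real.norm_eq_abs]
    exact entropy_bound (f v) (hpos v hv)
  have Iflog : IntervalIntegrable (fun v => f v * Real.log (f v) - f v) volume (-1) 1 := by
    rw [intervalIntegrable_iff_integrableOn_Icc_of_le hle]
    exact hflogi.sub hfi
  have hclin : Continuous fun v : ℝ => α + β * v :=
    continuous_const.add (continuous_const.mul continuous_id)
  have hcg : Continuous fun v : ℝ => Real.exp (α + β * v) := Real.continuous_exp.comp hclin
  have Ig : IntervalIntegrable (fun v => Real.exp (α + β * v)) volume (-1) 1 :=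
    hcg.intervalIntegrable _ _
  have Ivg : IntervalIntegrable (fun v => v * Real.exp (α + β * v)) volume (-1) 1 :=
    (continuous_id.mul hcg).intervalIntegrable _ _
  have Ic : IntervalIntegrable
      (fun v => Real.exp (α + β * v) * (α + β * v) - Real.exp (α + β * v)) volume (-1) 1 :=
    ((hcg.mul hclin).sub hcg).intervalIntegrable _ _
  have Ipart : IntervalIntegrable
      (fun v => (α + β * v) * (f v - Real.exp (α + β * v))) volume (-1) 1 := by
    apply IntervalIntegrable.continuousOn_mul (If.sub Ig)
    exact hclin.continuousOn
  -- the correction term integrates to zero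
  have hm1' : ∫ v in (-1:ℝ)..1, f v = 2 * ρ := by linarith
  have hm2' : ∫ v in (-1:ℝ)..1, v * f v = 2 * j := by linarith
  have hzero : ∫ v in (-1:ℝ)..1, (α + β * v) * (f v - Real.exp (α + β * v)) = 0 := by
    have expand : ∀ v : ℝ, (α + β * v) * (f v - Real.exp (α + β * v)) =
        (α * f v + β * (v * f v)) -
        (α * Real.exp (α + β * v) + β * (v * Real.exp (α + β * v))) := fun v => by ring
    simp_rw [expand]
    rw [intervalIntegral.integral_sub
      ((If.const_mul α).add (Ivf.const_mul β))
      ((Ig.const_mul α).add (Ivg.const_mul β)),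
      intervalIntegral.integral_add (If.const_mul α) (Ivf.const_mul β),
      intervalIntegral.integral_add (Ig.const_mul α) (Ivg.const_mul β),
      intervalIntegral.integral_const_mul, intervalIntegral.integral_const_mul,
      intervalIntegral.integral_const_mul, intervalIntegral.integral_const_mul,
      hm1', hm2', hint1, hint2]
    ring
  -- main estimate
  simp only [Real.log_exp]
  have key : (∫ v in (-1:ℝ)..1,
      (Real.exp (α + β * v) * (α + β * v) - Real.exp (α + β * v)))
      ≤ ∫ v in (-1:ℝ)..1, (f v * Real.log (f v) - f v) := by
    have step1 : (∫ v in (-1:ℝ)..1,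
        (Real.exp (α + β * v) * (α + β * v) - Real.exp (α + β * v))) =
        ∫ v in (-1:ℝ)..1,
          ((Real.exp (α + β * v) * (α + β * v) - Real.exp (α + β * v)) +
            (α + β * v) * (f v - Real.exp (α + β * v))) := by
      rw [intervalIntegral.integral_add Ic Ipart, hzero, add_zero]
    rw [step1]
    apply intervalIntegral.integral_mono_on hle (Ic.add Ipart) Iflog
    intro v hv
    have h := entropy_ptwise (f v) (Real.exp (α + β * v)) (hpos v hv) (Real.exp_pos _)
    rw [Real.log_exp] at h
    linarith
  linarith
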